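/- arXiv:2306.14602 — 2 statements merged into one kernel-verified Lean document; each statement's English description precedes it below -/
import Mathlib

section
/- Let α > 0, σ₀ > 0 and ρ ∈ ℝ. With A(T) = 4α²σ₀⁴·( e^{6α²T}T³/(12α²) + T²/(36α⁴) − (e^{6α²T}−1)T/(216α⁶) ), B(T) = 2α²σ₀³·( e^{3α²T}T/(2α⁴) − (e^{3α²T}−e^{α²T})/(4α⁶) − e^{3α²T}T/(3α⁴) + (e^{3α²T}−1)/(9α⁶) ), C(T) = 4α²σ₀²·( e^{α²T}T²/(2α²) − e^{α²T}T/α⁴ + (e^{α²T}−1)/α⁶ ), and D(T) = 2ασ₀²·( e^{α²T}T/α² − (e^{α²T}−1)/α⁴ ), one has lim_{T→0⁺} [ (3ρ²/(8σ₀³T⁴))·A(T) − (ρ²/(2σ₀²T³))·B(T) − (ρ²/(2σ₀T³))·C(T) + (ρ/(4T²))·D(T) ] = ρασ₀²/4. In particular, for ρ < 0 this limit is strictly negative. -/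
open Real Filter


-- remainder of Taylor series of exp at order n, as x → 0⁺
lemma taylor_base (n : ℕ) (hn : 0 < n) :
    Tendsto (fun x : ℝ => (Real.exp x - ∑ i ∈ Finset.range n, x ^ i / i.factorial) / x ^ n)
      (nhdsWithin 0 (Set.Ioi 0)) (nhds (1 / n.factorial)) := by
  have hg : Tendsto (fun x : ℝ =>
      (Real.exp x - ∑ i ∈ Finset.range (n + 1), x ^ i / i.factorial) / x ^ n)
      (nhdsWithin 0 (Set.Ioi 0)) (nhds 0) := by
    refine squeeze_zero_norm'
      (a := fun x : ℝ => x * ((n + 2 : ℝ) / ((n + 1).factorial * (n + 1)))) ?_ ?_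
    · filter_upwards [Ioo_mem_nhdsGT_of_mem (Set.mem_Ico.2 ⟨le_refl (0:ℝ), one_pos⟩)] with x hx
      have hx0 : 0 < x := hx.1
      have hb := Real.exp_bound (x := x) (by rw [abs_of_pos hx0]; exact le_of_lt hx.2)
        (n := n + 1) (Nat.succ_pos n)
      rw [Real.norm_eq_abs, abs_div, abs_of_pos (pow_pos hx0 n)]
      rw [div_le_iff₀ (pow_pos hx0 n)]
      calc |Real.exp x - ∑ i ∈ Finset.range (n + 1), x ^ i / i.factorial|
          ≤ |x| ^ (n + 1) * ((n + 2 : ℝ) / ((n + 1).factorial * (n + 1))) := by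
            convert hb using 3 <;> push_cast <;> ring
        _ = x * ((n + 2 : ℝ) / ((n + 1).factorial * (n + 1))) * x ^ n := by
            rw [abs_of_pos hx0]; ring
    · have : Tendsto (fun x : ℝ => x * ((n + 2 : ℝ) / ((n + 1).factorial * (n + 1))))
          (nhds 0) (nhds (0 * ((n + 2 : ℝ) / ((n + 1).factorial * (n + 1))))) :=
        (continuous_id.mul continuous_const).tendsto 0
      simpa using this.mono_left nhdsWithin_le_nhds
  have heq : ∀ᶠ x in nhdsWithin (0:ℝ) (Set.Ioi 0),
      1 / (n.factorial : ℝ) +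
        (Real.exp x - ∑ i ∈ Finset.range (n + 1), x ^ i / i.factorial) / x ^ n =
      (Real.exp x - ∑ i ∈ Finset.range n, x ^ i / i.factorial) / x ^ n := by
    filter_upwards [self_mem_nhdsWithin] with x hx
    have hx0 : (x : ℝ) ≠ 0 := ne_of_gt hx
    rw [Finset.sum_range_succ]
    have hfac : (n.factorial : ℝ) ≠ 0 := Nat.cast_ne_zero.2 n.factorial_ne_zero
    field_simp
    ring
  have := (tendsto_const_nhds.add hg).congr' heq
  simpa using this

lemma taylor_comp (c : ℝ) (hc : 0 < c) (n : ℕ) (hn : 0 < n) :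
    Tendsto (fun T : ℝ =>
        (Real.exp (c * T) - ∑ i ∈ Finset.range n, (c * T) ^ i / i.factorial) / T ^ n)
      (nhdsWithin 0 (Set.Ioi 0)) (nhds (c ^ n / n.factorial)) := by
  have hmap : Tendsto (fun T : ℝ => c * T) (nhdsWithin 0 (Set.Ioi 0))
      (nhdsWithin 0 (Set.Ioi 0)) := by
    apply tendsto_nhdsWithin_of_tendsto_nhds_of_eventually_within
    · simpa using ((continuous_mul_left c).tendsto 0).mono_left
        (nhdsWithin_le_nhds (s := Set.Ioi (0:ℝ)))
    · filter_upwards [self_mem_nhdsWithin] with T hT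
      exact Set.mem_Ioi.2 (mul_pos hc hT)
  have h := ((taylor_base n hn).comp hmap).const_mul (c ^ n)
  have heq : ∀ᶠ T in nhdsWithin (0:ℝ) (Set.Ioi 0),
      c ^ n * ((fun x : ℝ => (Real.exp x - ∑ i ∈ Finset.range n, x ^ i / i.factorial) / x ^ n)
          ((fun T : ℝ => c * T) T) ) =
      (Real.exp (c * T) - ∑ i ∈ Finset.range n, (c * T) ^ i / i.factorial) / T ^ n := by
    filter_upwards [self_mem_nhdsWithin] with T hT
    have hT0 : (T : ℝ) ≠ 0 := ne_of_gt hT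
    have hc0 : c ≠ 0 := ne_of_gt hc
    simp only [Function.comp, mul_pow]
    have hcn : (c : ℝ) ^ n ≠ 0 := pow_ne_zero n hc0
    have hTn : (T : ℝ) ^ n ≠ 0 := pow_ne_zero n hT0
    field_simp
  have := h.congr' heq
  simpa [mul_one_div, div_eq_mul_inv] using this


lemma rem2 (c : ℝ) (hc : 0 < c) :
    Tendsto (fun T : ℝ => (Real.exp (c * T) - 1 - c * T) / T ^ 2)
      (nhdsWithin 0 (Set.Ioi 0)) (nhds (c ^ 2 / 2)) := by
  have h := taylor_comp c hc 2 (by norm_num)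
  have hval : c ^ 2 / ((Nat.factorial 2 : ℕ) : ℝ) = c ^ 2 / 2 := by norm_num [Nat.factorial]
  rw [hval] at h
  exact h.congr fun T => by
    simp [Finset.sum_range_succ, Nat.factorial]; ring_nf

lemma rem3 (c : ℝ) (hc : 0 < c) :
    Tendsto (fun T : ℝ => (Real.exp (c * T) - 1 - c * T - c ^ 2 * T ^ 2 / 2) / T ^ 3)
      (nhdsWithin 0 (Set.Ioi 0)) (nhds (c ^ 3 / 6)) := by
  have h := taylor_comp c hc 3 (by norm_num)
  have hval : c ^ 3 / ((Nat.factorial 3 : ℕ) : ℝ) = c ^ 3 / 6 := by norm_num [Nat.factorial]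
  rw [hval] at h
  exact h.congr fun T => by
    simp [Finset.sum_range_succ, Nat.factorial]; ring_nf

lemma rem4 (c : ℝ) (hc : 0 < c) :
    Tendsto (fun T : ℝ =>
        (Real.exp (c * T) - 1 - c * T - c ^ 2 * T ^ 2 / 2 - c ^ 3 * T ^ 3 / 6) / T ^ 4)
      (nhdsWithin 0 (Set.Ioi 0)) (nhds (c ^ 4 / 24)) := by
  have h := taylor_comp c hc 4 (by norm_num)
  have hval : c ^ 4 / ((Nat.factorial 4 : ℕ) : ℝ) = c ^ 4 / 24 := by norm_num [Nat.factorial]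
  rw [hval] at h
  exact h.congr fun T => by
    simp [Finset.sum_range_succ, Nat.factorial]; ring_nf
set_option maxHeartbeats 2000000 in
theorem ATMI_lower_bound_limit (α σ₀ ρ : ℝ) (hα : 0 < α) (hσ : 0 < σ₀) :
    (Tendsto
      (fun T : ℝ =>
        (3 * ρ ^ 2 / (8 * σ₀ ^ 3 * T ^ 4)) *
            (4 * α ^ 2 * σ₀ ^ 4 *
              (exp (6 * α ^ 2 * T) * T ^ 3 / (12 * α ^ 2) + T ^ 2 / (36 * α ^ 4)
                - (exp (6 * α ^ 2 * T) - 1) * T / (216 * α ^ 6)))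
          - (ρ ^ 2 / (2 * σ₀ ^ 2 * T ^ 3)) *
              (2 * α ^ 2 * σ₀ ^ 3 *
                (exp (3 * α ^ 2 * T) * T / (2 * α ^ 4)
                  - (exp (3 * α ^ 2 * T) - exp (α ^ 2 * T)) / (4 * α ^ 6)
                  - exp (3 * α ^ 2 * T) * T / (3 * α ^ 4)
                  + (exp (3 * α ^ 2 * T) - 1) / (9 * α ^ 6)))
          - (ρ ^ 2 / (2 * σ₀ * T ^ 3)) *
              (4 * α ^ 2 * σ₀ ^ 2 *
                (exp (α ^ 2 * T) * T ^ 2 / (2 * α ^ 2) - exp (α ^ 2 * T) * T / α ^ 4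
                  + (exp (α ^ 2 * T) - 1) / α ^ 6))
          + (ρ / (4 * T ^ 2)) *
              (2 * α * σ₀ ^ 2 *
                (exp (α ^ 2 * T) * T / α ^ 2 - (exp (α ^ 2 * T) - 1) / α ^ 4)))
      (nhdsWithin 0 (Set.Ioi 0)) (nhds (ρ * α * σ₀ ^ 2 / 4))) ∧
    (ρ < 0 → ρ * α * σ₀ ^ 2 / 4 < 0) := by
  have hα0 : α ≠ 0 := ne_of_gt hα
  have hσ0 : σ₀ ≠ 0 := ne_of_gt hσ
  constructor
  · -- remainder limits
    have h6 := rem4 (6 * α ^ 2) (by positivity)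
    have h3 := rem3 (3 * α ^ 2) (by positivity)
    have h1 := rem3 (α ^ 2) (by positivity)
    have h2 := rem2 (α ^ 2) (by positivity)
    have hT : Tendsto (fun T : ℝ => T) (nhdsWithin 0 (Set.Ioi 0)) (nhds 0) :=
      tendsto_id.mono_right nhdsWithin_le_nhds
    set Φ : ℝ × ℝ × ℝ × ℝ × ℝ → ℝ := fun x =>
      (3 * ρ ^ 2 / (8 * σ₀ ^ 3)) * (4 * α ^ 2 * σ₀ ^ 4 *
          (1 / 3 + 3 / 2 * α ^ 2 * x.1 + 3 * α ^ 4 * x.1 ^ 2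
            + x.1 ^ 3 * x.2.1 / (12 * α ^ 2) - x.1 * x.2.1 / (216 * α ^ 6)))
        - (ρ ^ 2 / (2 * σ₀ ^ 2)) * (2 * α ^ 2 * σ₀ ^ 3 *
            (3 / 4 + x.1 * x.2.2.1 / (6 * α ^ 4) - 5 * x.2.2.1 / (36 * α ^ 6)
              + x.2.2.2.1 / (4 * α ^ 6)))
        - (ρ ^ 2 / (2 * σ₀)) * (4 * α ^ 2 * σ₀ ^ 2 *
            (α ^ 2 * x.1 / 4 + x.1 ^ 2 * x.2.2.2.1 / (2 * α ^ 2)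
              - x.1 * x.2.2.2.1 / α ^ 4 + x.2.2.2.1 / α ^ 6))
        + (ρ / 4) * (2 * α * σ₀ ^ 2 *
            (1 + x.1 * x.2.2.2.2 / α ^ 2 - x.2.2.2.2 / α ^ 4)) with hΦ
    have hcont : Continuous Φ := by rw [hΦ]; fun_prop
    have htuple := hT.prodMk_nhds (h6.prodMk_nhds (h3.prodMk_nhds (h1.prodMk_nhds h2)))
    have hmain := (hcont.tendsto _).comp htuple
    have hval : Φ (0, (6 * α ^ 2) ^ 4 / 24, (3 * α ^ 2) ^ 3 / 6, (α ^ 2) ^ 3 / 6,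
        (α ^ 2) ^ 2 / 2) = ρ * α * σ₀ ^ 2 / 4 := by
      rw [hΦ]; field_simp; ring
    rw [hval] at hmain
    refine Tendsto.congr' ?_ hmain
    filter_upwards [self_mem_nhdsWithin] with T hT0
    have hTne : T ≠ 0 := ne_of_gt hT0
    simp only [Function.comp_apply, hΦ]
    field_simp
    ring
  · intro hρ
    have : ρ * α * σ₀ ^ 2 < 0 :=
      mul_neg_of_neg_of_pos (mul_neg_of_neg_of_pos hρ hα) (pow_pos hσ 2)
    linarith
end

section
/- Let α > 0, σ₀ > 0 and ρ ∈ ℝ. With A(T) = 4α²σ₀⁴·( e^{6α²T}T³/(12α²) + T²/(36α⁴) − (e^{6α²T}−1)T/(216α⁶) ), B(T) = 2α²σ₀³·( e^{3α²T}T/(2α⁴) − (e^{3α²T}−e^{α²T})/(4α⁶) − e^{3α²T}T/(3α⁴) + (e^{3α²T}−1)/(9α⁶) ), and C(T) = 4α²σ₀²·( e^{α²T}T²/(2α²) − e^{α²T}T/α⁴ + (e^{α²T}−1)/α⁶ ), one has lim_{T→0⁺} [ (3ρ²/(8σ₀³T⁴))·A(T) − (ρ²/(2σ₀²T³))·B(T)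 − (ρ²/(2σ₀T³))·C(T) ] = 0; equivalently, (3ρ²/(8σ₀³))·(4α²σ₀⁴/3) − (ρ²/(2σ₀²))·(α²σ₀³/3) − (ρ²/(2σ₀))·(2α²σ₀²/3) = 0. -/
open Real Filter

private lemma exp_taylor3_tendsto :
    Tendsto (fun x : ℝ => (exp x - (1 + x + x ^ 2 / 2 + x ^ 3 / 6)) / x ^ 3)
      (nhdsWithin 0 {(0:ℝ)}ᶜ) (nhds 0) := by
  have habs : Tendsto (fun x : ℝ => |x|) (nhdsWithin 0 {(0:ℝ)}ᶜ) (nhds 0) := by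
    have : Tendsto (fun x : ℝ => |x|) (nhds 0) (nhds 0) := by
      simpa using (continuous_abs.tendsto (0:ℝ))
    exact this.mono_left nhdsWithin_le_nhds
  have hsmall : ∀ᶠ x : ℝ in nhdsWithin 0 {(0:ℝ)}ᶜ, |x| < 1 :=
    habs.eventually_lt_const one_pos
  have hne : ∀ᶠ x : ℝ in nhdsWithin 0 {(0:ℝ)}ᶜ, x ≠ 0 :=
    eventually_mem_nhdsWithin
  apply squeeze_zero_norm'
    (a := fun x : ℝ => 5 / 96 * |x|)
  · filter_upwards [hsmall, hne] with x hx1 hx0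
    have hb := Real.exp_bound (x := x) hx1.le (by norm_num : 0 < 4)
    have hsum : (∑ m ∈ Finset.range 4, x ^ m / (Nat.factorial m)) =
        1 + x + x ^ 2 / 2 + x ^ 3 / 6 := by
      norm_num [Finset.sum_range_succ, Nat.factorial]
    rw [hsum] at hb
    have hbound : |exp x - (1 + x + x ^ 2 / 2 + x ^ 3 / 6)| ≤ |x| ^ 4 * (5 / 96) := by
      convert hb using 2
      norm_num [Nat.factorial]
    have hx3 : |x| ^ 3 > 0 := by positivity
    rw [Real.norm_eq_abs, abs_div, abs_pow]
    rw [div_le_iff₀ hx3]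
    calc |exp x - (1 + x + x ^ 2 / 2 + x ^ 3 / 6)| ≤ |x| ^ 4 * (5 / 96) := hbound
      _ = 5 / 96 * |x| * |x| ^ 3 := by ring
  · simpa using habs.const_mul (5 / 96 : ℝ)

private lemma exp_taylor3_tendsto_Ioi (c : ℝ) (hc : c ≠ 0) :
    Tendsto (fun T : ℝ =>
        (exp (c * T) - (1 + c * T + (c * T) ^ 2 / 2 + (c * T) ^ 3 / 6)) / T ^ 3)
      (nhdsWithin 0 (Set.Ioi 0)) (nhds 0) := by
  have hinner : Tendsto (fun T : ℝ => c * T) (nhdsWithin 0 (Set.Ioi 0))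
      (nhdsWithin 0 {(0:ℝ)}ᶜ) := by
    apply tendsto_nhdsWithin_of_tendsto_nhds_of_eventually_within
    · have : Tendsto (fun T : ℝ => c * T) (nhds 0) (nhds (c * 0)) :=
        (continuous_const.mul continuous_id).tendsto 0
      simpa using this.mono_left nhdsWithin_le_nhds
    · filter_upwards [self_mem_nhdsWithin] with T hT
      exact mul_ne_zero hc (ne_of_gt hT)
  have hcomp := (exp_taylor3_tendsto.comp hinner).const_mul (c ^ 3)
  have : Tendsto (fun T : ℝ =>
      c ^ 3 * ((exp (c * T) - (1 + c * T + (c * T) ^ 2 / 2 + (c * T) ^ 3 / 6)) / (c * T) ^ 3))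
      (nhdsWithin 0 (Set.Ioi 0)) (nhds 0) := by
    simpa [Function.comp] using hcomp
  apply this.congr'
  filter_upwards [self_mem_nhdsWithin] with T hT
  have hT0 : T ≠ 0 := ne_of_gt hT
  field_simp

set_option maxHeartbeats 2000000 in
theorem ZVIV_lower_bound_limit (α σ₀ ρ : ℝ) (hα : 0 < α) (hσ : 0 < σ₀) :
    (Tendsto
      (fun T : ℝ =>
        (3 * ρ ^ 2 / (8 * σ₀ ^ 3 * T ^ 4)) *
            (4 * α ^ 2 * σ₀ ^ 4 *
              (exp (6 * α ^ 2 * T) * T ^ 3 / (12 * α ^ 2) + T ^ 2 / (36 * α ^ 4)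
                - (exp (6 * α ^ 2 * T) - 1) * T / (216 * α ^ 6)))
          - (ρ ^ 2 / (2 * σ₀ ^ 2 * T ^ 3)) *
              (2 * α ^ 2 * σ₀ ^ 3 *
                (exp (3 * α ^ 2 * T) * T / (2 * α ^ 4)
                  - (exp (3 * α ^ 2 * T) - exp (α ^ 2 * T)) / (4 * α ^ 6)
                  - exp (3 * α ^ 2 * T) * T / (3 * α ^ 4)
                  + (exp (3 * α ^ 2 * T) - 1) / (9 * α ^ 6)))
          - (ρ ^ 2 / (2 * σ₀ * T ^ 3)) *
              (4 * α ^ 2 * σ₀ ^ 2 *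
                (exp (α ^ 2 * T) * T ^ 2 / (2 * α ^ 2) - exp (α ^ 2 * T) * T / α ^ 4
                  + (exp (α ^ 2 * T) - 1) / α ^ 6)))
      (nhdsWithin 0 (Set.Ioi 0)) (nhds 0)) ∧
    (3 * ρ ^ 2 / (8 * σ₀ ^ 3)) * (4 * α ^ 2 * σ₀ ^ 4 / 3)
        - (ρ ^ 2 / (2 * σ₀ ^ 2)) * (α ^ 2 * σ₀ ^ 3 / 3)
        - (ρ ^ 2 / (2 * σ₀)) * (2 * α ^ 2 * σ₀ ^ 2 / 3) = 0 := by
  have hα0 : (α : ℝ) ≠ 0 := ne_of_gt hα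
  have hσ0 : (σ₀ : ℝ) ≠ 0 := ne_of_gt hσ
  constructor
  · -- the limit part
    have h6 := exp_taylor3_tendsto_Ioi (6 * α ^ 2) (by positivity)
    have h3 := exp_taylor3_tendsto_Ioi (3 * α ^ 2) (by positivity)
    have h1 := exp_taylor3_tendsto_Ioi (α ^ 2) (by positivity)
    have hT : Tendsto (fun T : ℝ => T) (nhdsWithin 0 (Set.Ioi 0)) (nhds 0) :=
      tendsto_id.mono_right nhdsWithin_le_nhds
    set g6 : ℝ → ℝ := fun T =>
      (exp (6 * α ^ 2 * T) -
        (1 + 6 * α ^ 2 * T + (6 * α ^ 2 * T) ^ 2 / 2 + (6 * α ^ 2 * T) ^ 3 / 6)) / T ^ 3 with hg6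
    set g3 : ℝ → ℝ := fun T =>
      (exp (3 * α ^ 2 * T) -
        (1 + 3 * α ^ 2 * T + (3 * α ^ 2 * T) ^ 2 / 2 + (3 * α ^ 2 * T) ^ 3 / 6)) / T ^ 3 with hg3
    set g1 : ℝ → ℝ := fun T =>
      (exp (α ^ 2 * T) -
        (1 + α ^ 2 * T + (α ^ 2 * T) ^ 2 / 2 + (α ^ 2 * T) ^ 3 / 6)) / T ^ 3 with hg1
    have hcont : Continuous (fun p : ℝ × ℝ × ℝ × ℝ =>
        ρ ^ 2 * σ₀ * α ^ 2 *
          ((α ^ 2 * p.1) * (4 / 3 + 13 * (α ^ 2 * p.1) / 3) +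
            ((α ^ 2 * p.1) ^ 2 * (p.2.1 / 8 - p.2.2.2) +
              (α ^ 2 * p.1) * (-(p.2.2.1) / 6 + 2 * p.2.2.2) -
              p.2.1 / 144 + (p.2.2.1 - p.2.2.2) / 4 - p.2.2.1 / 9 - 2 * p.2.2.2) / α ^ 6)) := by
      fun_prop
    have hF : Tendsto (fun T : ℝ =>
        ρ ^ 2 * σ₀ * α ^ 2 *
          ((α ^ 2 * T) * (4 / 3 + 13 * (α ^ 2 * T) / 3) +
            ((α ^ 2 * T) ^ 2 * (g6 T / 8 - g1 T) +
              (α ^ 2 * T) * (-(g3 T) / 6 + 2 * g1 T) -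
              g6 T / 144 + (g3 T - g1 T) / 4 - g3 T / 9 - 2 * g1 T) / α ^ 6))
        (nhdsWithin 0 (Set.Ioi 0)) (nhds 0) := by
      have hcomp := (hcont.tendsto ((0 : ℝ), (0 : ℝ), (0 : ℝ), (0 : ℝ))).comp
        (hT.prodMk_nhds (h6.prodMk_nhds (h3.prodMk_nhds h1)))
      simpa [Function.comp_def] using hcomp
    apply hF.congr'
    filter_upwards [self_mem_nhdsWithin] with T hTpos
    have hT0 : T ≠ 0 := ne_of_gt hTpos
    simp only [hg6, hg3, hg1]
    field_simp
    ring
  · field_simp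
    ring
end
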